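/- Consider the projected generalized Sylvester equation T Z + Z Hᵀ + ∑_{i=1}^m Gᵢ Z Fᵢᵀ = E, where T = VᵀAV, H = WᵀBW, Gᵢ = VᵀNᵢV, Fᵢ = WᵀMᵢW for orthonormal-column matrices V, W. If λ is an eigenvalue of the generalized eigenproblem (∑ Fᵢ ⊗ Gᵢ) v = λ (H ⊗ I + I ⊗ T) v with eigenvector v ≠ 0 and the denominator nonzero, then λ = [xᴴ(∑ Mᵢ⊗Nᵢ)x] / [xᴴ(B⊗I + I⊗A)x] where x = (W ⊗ V)v. Consequently, if the ratio field of values R(∑Mᵢ⊗Nᵢ, B⊗I+I⊗A) lies strictly inside the open unit disk, then |λ| < 1. -/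

import Mathlib

open Matrix Kronecker Finset


private lemma mapMul_ofReal {p q r : Type*} [Fintype q]
    (X : Matrix p q ℝ) (Y : Matrix q r ℝ) :
    (X * Y).map Complex.ofReal = X.map Complex.ofReal * Y.map Complex.ofReal := by
  ext i j
  simp [Matrix.map_apply, Matrix.mul_apply]

/-- **Eigenvalues of the projected generalized eigenproblem.** With
`T = VᵀAV`, `H = WᵀBW`, `Gᵢ = VᵀNᵢV`, `Fᵢ = WᵀMᵢW` for `V, W` with orthonormal
columns, if `(∑ Fᵢ ⊗ Gᵢ) v = λ (H⊗I + I⊗T) v` with `v ≠ 0` and the denominator is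
nonzero, then `λ = xᴴ(∑ Mᵢ⊗Nᵢ)x / xᴴ(B⊗I + I⊗A)x` with `x = (W ⊗ V) v`; hence if
the ratio field of values `R(∑Mᵢ⊗Nᵢ, B⊗I+I⊗A)` lies strictly inside the open unit
disk, then `|λ| < 1`. -/
theorem projected_problem_eigenvalue {n k m : ℕ}
    (A B : Matrix (Fin n) (Fin n) ℝ)
    (Nm Mm : Fin m → Matrix (Fin n) (Fin n) ℝ)
    (V W : Matrix (Fin n) (Fin k) ℝ)
    (hV : Vᵀ * V = 1) (hW : Wᵀ * W = 1)
    (T H : Matrix (Fin k) (Fin k) ℝ) (G F : Fin m → Matrix (Fin k) (Fin k) ℝ)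
    (hT : T = Vᵀ * A * V) (hH : H = Wᵀ * B * W)
    (hG : ∀ i, G i = Vᵀ * Nm i * V) (hF : ∀ i, F i = Wᵀ * Mm i * W)
    (lam : ℂ) (v : Fin k × Fin k → ℂ) (hv : v ≠ 0)
    (heig : ((∑ i, F i ⊗ₖ G i).map Complex.ofReal) *ᵥ v =
      lam • (((H ⊗ₖ (1 : Matrix (Fin k) (Fin k) ℝ) +
        (1 : Matrix (Fin k) (Fin k) ℝ) ⊗ₖ T).map Complex.ofReal) *ᵥ v))
    (x : Fin n × Fin n → ℂ) (hx : x = ((W ⊗ₖ V).map Complex.ofReal) *ᵥ v)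
    (hden : star x ⬝ᵥ
        (((B ⊗ₖ (1 : Matrix (Fin n) (Fin n) ℝ) +
          (1 : Matrix (Fin n) (Fin n) ℝ) ⊗ₖ A).map Complex.ofReal) *ᵥ x) ≠ 0) :
    lam =
        (star x ⬝ᵥ (((∑ i, Mm i ⊗ₖ Nm i).map Complex.ofReal) *ᵥ x)) /
          (star x ⬝ᵥ
            (((B ⊗ₖ (1 : Matrix (Fin n) (Fin n) ℝ) +
              (1 : Matrix (Fin n) (Fin n) ℝ) ⊗ₖ A).map Complex.ofReal) *ᵥ x)) ∧
      ((∀ y : Fin n × Fin n → ℂ, y ≠ 0 →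
          star y ⬝ᵥ
            (((B ⊗ₖ (1 : Matrix (Fin n) (Fin n) ℝ) +
              (1 : Matrix (Fin n) (Fin n) ℝ) ⊗ₖ A).map Complex.ofReal) *ᵥ y) ≠ 0 →
          Norm.norm
            ((star y ⬝ᵥ (((∑ i, Mm i ⊗ₖ Nm i).map Complex.ofReal) *ᵥ y)) /
              (star y ⬝ᵥ
                (((B ⊗ₖ (1 : Matrix (Fin n) (Fin n) ℝ) +
                  (1 : Matrix (Fin n) (Fin n) ℝ) ⊗ₖ A).map Complex.ofReal) *ᵥ y))) < 1) →
        Norm.norm lam < 1) := by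
  classical
  set Q : Matrix (Fin n × Fin n) (Fin k × Fin k) ℂ := (W ⊗ₖ V).map Complex.ofReal with hQ
  have hQH : Qᴴ = ((W ⊗ₖ V)ᵀ).map Complex.ofReal := by
    ext i j
    simp [hQ, Matrix.conjTranspose_apply, Matrix.map_apply]
  have hconj : ∀ P : Matrix (Fin n × Fin n) (Fin n × Fin n) ℝ,
      star x ⬝ᵥ (P.map Complex.ofReal *ᵥ x) =
      star v ⬝ᵥ ((((W ⊗ₖ V)ᵀ * P * (W ⊗ₖ V)).map Complex.ofReal) *ᵥ v) := by
    intro P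
    have hmap : (((W ⊗ₖ V)ᵀ * P * (W ⊗ₖ V)).map Complex.ofReal)
        = Qᴴ * P.map Complex.ofReal * Q := by
      rw [hQH, hQ, mapMul_ofReal, mapMul_ofReal]
    rw [hx, hmap, Matrix.star_mulVec, Matrix.dotProduct_mulVec,
      Matrix.dotProduct_mulVec, Matrix.dotProduct_mulVec,
      Matrix.vecMul_vecMul, Matrix.vecMul_vecMul, Matrix.mul_assoc]
  have hmat1 : (W ⊗ₖ V)ᵀ * (∑ i, Mm i ⊗ₖ Nm i) * (W ⊗ₖ V) = ∑ i, F i ⊗ₖ G i := by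
    rw [← Matrix.kroneckerMap_transpose, Matrix.mul_sum, Matrix.sum_mul]
    refine Finset.sum_congr rfl fun i _ => ?_
    rw [← Matrix.mul_kronecker_mul, ← Matrix.mul_kronecker_mul, hF i, hG i]
  have hmat2 : (W ⊗ₖ V)ᵀ * (B ⊗ₖ (1 : Matrix (Fin n) (Fin n) ℝ) +
        (1 : Matrix (Fin n) (Fin n) ℝ) ⊗ₖ A) * (W ⊗ₖ V) =
      H ⊗ₖ (1 : Matrix (Fin k) (Fin k) ℝ) + (1 : Matrix (Fin k) (Fin k) ℝ) ⊗ₖ T := by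
    rw [← Matrix.kroneckerMap_transpose, Matrix.mul_add, Matrix.add_mul,
      ← Matrix.mul_kronecker_mul, ← Matrix.mul_kronecker_mul,
      ← Matrix.mul_kronecker_mul, ← Matrix.mul_kronecker_mul,
      Matrix.mul_one, Matrix.mul_one, hV, hW, hH, hT]
  have hnum : star x ⬝ᵥ (((∑ i, Mm i ⊗ₖ Nm i).map Complex.ofReal) *ᵥ x) =
      star v ⬝ᵥ (((∑ i, F i ⊗ₖ G i).map Complex.ofReal) *ᵥ v) := by
    rw [hconj, hmat1]
  have hden' : star x ⬝ᵥ (((B ⊗ₖ (1 : Matrix (Fin n) (Fin n) ℝ) +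
        (1 : Matrix (Fin n) (Fin n) ℝ) ⊗ₖ A).map Complex.ofReal) *ᵥ x) =
      star v ⬝ᵥ (((H ⊗ₖ (1 : Matrix (Fin k) (Fin k) ℝ) +
        (1 : Matrix (Fin k) (Fin k) ℝ) ⊗ₖ T).map Complex.ofReal) *ᵥ v) := by
    rw [hconj, hmat2]
  have heq : star v ⬝ᵥ (((∑ i, F i ⊗ₖ G i).map Complex.ofReal) *ᵥ v) =
      lam * (star v ⬝ᵥ (((H ⊗ₖ (1 : Matrix (Fin k) (Fin k) ℝ) +
        (1 : Matrix (Fin k) (Fin k) ℝ) ⊗ₖ T).map Complex.ofReal) *ᵥ v)) := by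
    rw [heig, dotProduct_smul, smul_eq_mul]
  have hdv : star v ⬝ᵥ (((H ⊗ₖ (1 : Matrix (Fin k) (Fin k) ℝ) +
        (1 : Matrix (Fin k) (Fin k) ℝ) ⊗ₖ T).map Complex.ofReal) *ᵥ v) ≠ 0 := by
    rw [← hden']; exact hden
  have hlam : lam =
      (star x ⬝ᵥ (((∑ i, Mm i ⊗ₖ Nm i).map Complex.ofReal) *ᵥ x)) /
        (star x ⬝ᵥ (((B ⊗ₖ (1 : Matrix (Fin n) (Fin n) ℝ) +
          (1 : Matrix (Fin n) (Fin n) ℝ) ⊗ₖ A).map Complex.ofReal) *ᵥ x)) := by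
    rw [hnum, hden', eq_div_iff hdv]
    exact heq.symm
  refine ⟨hlam, fun hball => ?_⟩
  have hx0 : x ≠ 0 := by
    intro h0
    apply hv
    have hid : Qᴴ * Q = 1 := by
      rw [hQH, hQ, ← mapMul_ofReal, ← Matrix.kroneckerMap_transpose,
        show Wᵀ ⊗ₖ Vᵀ * (W ⊗ₖ V) = (Wᵀ * W) ⊗ₖ (Vᵀ * V) from
          (Matrix.mul_kronecker_mul _ _ _ _).symm, hV, hW,
        Matrix.one_kronecker_one,
        Matrix.map_one Complex.ofReal Complex.ofReal_zero Complex.ofReal_one]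
    have hveq : v = Qᴴ *ᵥ x := by
      rw [hx, Matrix.mulVec_mulVec, hid, Matrix.one_mulVec]
    rw [hveq, h0, Matrix.mulVec_zero]
  have := hball x hx0 hden
  rwa [← hlam] at this
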